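/- Suppose edge (a,b) is deleted from G producing G', and let v, u be vertices with dist_G(v,a) + 1 = dist_G(v,b) and dist_G(u,a) + 1 = dist_G(u,b) (both on the 'a-side'). Then dist_{G'}(v,u) = dist_G(v,u) and spc_{G'}(v,u) = spc_G(v,u). -/

import Mathlib

/-- The number of shortest paths between `v` and `u` in `G`. -/
noncomputable def spc {V : Type*} (G : SimpleGraph V) (v u : V) : ℕ :=
  {p : G.Walk v u | p.IsPath ∧ p.length = G.dist v u}.ncard

open SimpleGraph

lemma key_avoid {V : Type*} (G : SimpleGraph V) (a b : V) (hadj : G.Adj a b)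
    (v u : V) (hrv : G.Reachable v a) (hru : G.Reachable u a)
    (hv : G.dist v a + 1 = G.dist v b) (hu : G.dist u a + 1 = G.dist u b)
    (p : G.Walk v u) (hp : p.length = G.dist v u) : s(a, b) ∉ p.edges := by
  classical
  intro he
  have ha : a ∈ p.support := p.fst_mem_support_of_mem_edges he
  have hsplit := p.take_spec ha
  set q := p.takeUntil a ha with hq
  set r := p.dropUntil a ha with hr
  -- triangle: dist v u ≤ dist v a + dist a u
  obtain ⟨w1, hw1⟩ := hrv.exists_walk_length_eq_dist
  obtain ⟨w2, hw2⟩ := hru.symm.exists_walk_length_eq_dist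
  have htri : G.dist v u ≤ G.dist v a + G.dist a u := by
    have := G.dist_le (w1.append w2)
    rwa [SimpleGraph.Walk.length_append, hw1, hw2] at this
  have hlen : q.length + r.length = p.length := by
    have := congrArg SimpleGraph.Walk.length hsplit
    rwa [SimpleGraph.Walk.length_append] at this
  have hqd : G.dist v a ≤ q.length := G.dist_le q
  have hrd : G.dist a u ≤ r.length := G.dist_le r
  have hab : 1 ≤ G.dist a b := hadj.reachable.pos_dist_of_ne hadj.ne
  have hedges : s(a, b) ∈ q.edges ∨ s(a, b) ∈ r.edges := by
    have h := he
    rw [← hsplit] at h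
    rw [SimpleGraph.Walk.edges_append, List.mem_append] at h
    exact h
  have hbig : G.dist v a + G.dist a u + 2 ≤ p.length := by
    rcases hedges with hq2 | hr2
    · -- edge in q : Walk v a; b ∈ q.support
      have hb : b ∈ q.support := q.snd_mem_support_of_mem_edges hq2
      have hspl2 := q.take_spec hb
      have hlen2 : (q.takeUntil b hb).length + (q.dropUntil b hb).length = q.length := by
        have := congrArg SimpleGraph.Walk.length hspl2
        rwa [SimpleGraph.Walk.length_append] at this
      have h1 : G.dist v b ≤ (q.takeUntil b hb).length := G.dist_le _
      have h2 : G.dist b a ≤ (q.dropUntil b hb).length := G.dist_le _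
      have hba' : G.dist b a = G.dist a b := SimpleGraph.dist_comm
      have hba : 1 ≤ G.dist b a := by omega
      omega
    · -- edge in r : Walk a u; b ∈ r.support
      have hb : b ∈ r.support := r.snd_mem_support_of_mem_edges hr2
      have hspl2 := r.take_spec hb
      have hlen2 : (r.takeUntil b hb).length + (r.dropUntil b hb).length = r.length := by
        have := congrArg SimpleGraph.Walk.length hspl2
        rwa [SimpleGraph.Walk.length_append] at this
      have h1 : G.dist a b ≤ (r.takeUntil b hb).length := G.dist_le _
      have h2 : G.dist b u ≤ (r.dropUntil b hb).length := G.dist_le _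
      have hbu' : G.dist b u = G.dist u b := SimpleGraph.dist_comm
      have hau : G.dist a u = G.dist u a := SimpleGraph.dist_comm
      omega
  omega

theorem stmt_13 {V : Type*} (G : SimpleGraph V) (a b : V) (hadj : G.Adj a b)
    (G' : SimpleGraph V) (hG' : G' = G.deleteEdges {s(a, b)}) (v u : V)
    (hrv : G.Reachable v a) (hru : G.Reachable u a)
    (hv : G.dist v a + 1 = G.dist v b) (hu : G.dist u a + 1 = G.dist u b) :
    G'.edist v u = G.edist v u ∧ spc G' v u = spc G v u := by
  have hle : G' ≤ G := hG' ▸ G.deleteEdges_le _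
  have hrvu : G.Reachable v u := hrv.trans hru.symm
  obtain ⟨p₀, hp₀⟩ := hrvu.exists_walk_length_eq_dist
  have hedge : ∀ (p : G.Walk v u), p.length = G.dist v u →
      ∀ e ∈ p.edges, e ∈ G'.edgeSet := by
    intro p hp e hep
    have h1 : e ∈ G.edgeSet := p.edges_subset_edgeSet hep
    have h2 : e ≠ s(a, b) := by
      intro h; exact key_avoid G a b hadj v u hrv hru hv hu p hp (h ▸ hep)
    rw [hG', edgeSet_deleteEdges]
    exact ⟨h1, by simpa using h2⟩
  have hne : G.edist v u ≠ ⊤ := edist_ne_top_iff_reachable.mpr hrvu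
  have hedist_eq : G.edist v u = (G.dist v u : ℕ∞) := (ENat.coe_toNat hne).symm
  have hdistle : G'.edist v u ≤ G.edist v u := by
    have := (p₀.transfer G' (hedge p₀ hp₀)).edist_le
    rw [SimpleGraph.Walk.length_transfer, hp₀] at this
    rw [hedist_eq]
    exact_mod_cast this
  have hedist : G'.edist v u = G.edist v u :=
    le_antisymm hdistle (edist_anti hle)
  refine ⟨hedist, ?_⟩
  have hdist : G'.dist v u = G.dist v u := by
    unfold SimpleGraph.dist
    rw [hedist]
  -- bijection between shortest paths
  have hsub : ∀ (p : G'.Walk v u), ∀ e ∈ p.edges, e ∈ G.edgeSet :=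
    fun p e hep => edgeSet_subset_edgeSet.mpr hle (p.edges_subset_edgeSet hep)
  set f : G'.Walk v u → G.Walk v u := fun p => p.transfer G (hsub p) with hf
  have hfmap : f = fun p => p.map (SimpleGraph.Hom.ofLE hle) :=
    funext fun p => p.transfer_eq_map_ofLE _ hle
  have hinj : Function.Injective f := by
    rw [hfmap]
    exact SimpleGraph.Walk.map_injective_of_injective (fun x y hxy => hxy) v u
  have himg : {p : G.Walk v u | p.IsPath ∧ p.length = G.dist v u} =
      f '' {p : G'.Walk v u | p.IsPath ∧ p.length = G'.dist v u} := by
    ext p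
    constructor
    · rintro ⟨hpath, hplen⟩
      refine ⟨p.transfer G' (hedge p hplen), ⟨hpath.transfer _, ?_⟩, ?_⟩
      · rw [SimpleGraph.Walk.length_transfer, hplen, hdist]
      · show (p.transfer G' (hedge p hplen)).transfer G _ = p
        rw [SimpleGraph.Walk.transfer_transfer]
        exact p.transfer_self
    · rintro ⟨p', ⟨hpath, hplen⟩, rfl⟩
      refine ⟨hpath.transfer _, ?_⟩
      show (p'.transfer G _).length = _
      rw [SimpleGraph.Walk.length_transfer, hplen, hdist]
  unfold spc
  rw [himg, Set.ncard_image_of_injective _ hinj]
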